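/- arXiv:2508.15133 — 3 statements merged into one kernel-verified Lean document; each statement's English description precedes it below -/
import Mathlib

section
/- Let T be the reference triangle and let Q be a quadrature rule on T that is exact for degree ≤ d. If H is a homogeneous real polynomial in two variables of degree d+1, and A : ℝ² → ℝ² is the affine map A(x) = s·x + c for some s ∈ ℝ and c ∈ ℝ², then E_Q(H ∘ A) = s^{d+1} · E_Q(H). -/
open MeasureTheory

/-- The reference triangle: convex hull of (0,0), (1,0), (0,1). -/
noncomputable def refTriangle : Set (ℝ × ℝ) :=
  convexHull ℝ ({(0, 0), (1, 0), (0, 1)} : Set (ℝ × ℝ))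

/-- Evaluation of a bivariate polynomial at a point of ℝ². -/
noncomputable def evalP (p : MvPolynomial (Fin 2) ℝ) (q : ℝ × ℝ) : ℝ :=
  MvPolynomial.eval ![q.1, q.2] p

/-- Action of the quadrature rule with nodes `x` and weights `w`: Q(f) = ∑ wᵢ f(xᵢ). -/
noncomputable def quadApply {n : ℕ} (x : Fin n → ℝ × ℝ) (w : Fin n → ℝ)
    (f : ℝ × ℝ → ℝ) : ℝ :=
  ∑ i, w i * f (x i)

/-- Error functional of the quadrature rule: E_Q(f) = ∫_T f - Q(f). -/
noncomputable def errQ {n : ℕ} (x : Fin n → ℝ × ℝ) (w : Fin n → ℝ)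
    (f : ℝ × ℝ → ℝ) : ℝ :=
  (∫ q in refTriangle, f q) - quadApply x w f

/-- Exactness of the quadrature rule for all polynomials of total degree ≤ d. -/
def ExactDeg {n : ℕ} (x : Fin n → ℝ × ℝ) (w : Fin n → ℝ) (d : ℕ) : Prop :=
  ∀ p : MvPolynomial (Fin 2) ℝ, p.totalDegree ≤ d →
    (∫ q in refTriangle, evalP p q) = quadApply x w (evalP p)

section Aux

open MvPolynomial

private lemma deg_lin (s a : ℝ) (i : Fin 2) :
    ((C s * X i + C a : MvPolynomial (Fin 2) ℝ)).totalDegree ≤ 1 := by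
  refine (totalDegree_add _ _).trans ?_
  simp only [totalDegree_C, max_le_iff]
  constructor
  · exact (totalDegree_mul _ _).trans (by simp [totalDegree_X])
  · omega

private lemma deg_CXpow (s : ℝ) (i : Fin 2) (m : ℕ) :
    ((C (s ^ m) * X i ^ m : MvPolynomial (Fin 2) ℝ)).totalDegree ≤ m := by
  refine (totalDegree_mul _ _).trans ?_
  rw [totalDegree_C]
  have := (totalDegree_pow (X i : MvPolynomial (Fin 2) ℝ) m).trans
    (by rw [totalDegree_X] : m * (X i : MvPolynomial (Fin 2) ℝ).totalDegree ≤ m * 1)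
  omega

private lemma pow_sub_top (s a : ℝ) (i : Fin 2) :
    ∀ m : ℕ, (((C s * X i + C a) ^ m - C (s ^ m) * X i ^ m :
      MvPolynomial (Fin 2) ℝ)).totalDegree ≤ m - 1 := by
  intro m
  induction m with
  | zero => simp
  | succ m ih =>
    have key : ((C s * X i + C a) ^ (m+1) - C (s ^ (m+1)) * X i ^ (m+1) :
        MvPolynomial (Fin 2) ℝ)
        = (C s * X i + C a) * ((C s * X i + C a) ^ m - C (s ^ m) * X i ^ m)
          + C a * (C (s ^ m) * X i ^ m) := by
      rw [pow_succ s m, map_mul]; ring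
    rw [key]
    refine (totalDegree_add _ _).trans (max_le ?_ ?_)
    · match m with
      | 0 => simp
      | Nat.succ k =>
        refine (totalDegree_mul _ _).trans ?_
        have := deg_lin s a i
        omega
    · refine (totalDegree_mul _ _).trans ?_
      have := deg_CXpow s i m
      rw [totalDegree_C]
      omega

private lemma prod_univ_pow (g : Fin 2 → MvPolynomial (Fin 2) ℝ) (k : Fin 2 →₀ ℕ) :
    (∏ i ∈ k.support, g i ^ k i) = g 0 ^ k 0 * g 1 ^ k 1 := by
  rw [Finset.prod_subset (Finset.subset_univ k.support)
    (fun i _ h => by simp [Finsupp.notMem_support_iff.mp h]), Fin.prod_univ_two]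

private lemma bind_monomial_sub (s c0 c1 : ℝ) (k : Fin 2 →₀ ℕ) (a : ℝ) :
    ((bind₁ (fun i : Fin 2 => C s * X i + C (![c0, c1] i)) (monomial k a)
      - C (s ^ (k 0 + k 1)) * monomial k a : MvPolynomial (Fin 2) ℝ)).totalDegree
      ≤ (k 0 + k 1) - 1 := by
  set f : Fin 2 → MvPolynomial (Fin 2) ℝ := fun i => C s * X i + C (![c0, c1] i) with hf
  have hbm : bind₁ f (monomial k a) = C a * (f 0 ^ k 0 * f 1 ^ k 1) := by
    rw [bind₁_monomial, prod_univ_pow]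
  have hmon : (monomial k a : MvPolynomial (Fin 2) ℝ)
      = C a * ((X 0 : MvPolynomial (Fin 2) ℝ) ^ k 0 * X 1 ^ k 1) := by
    rw [monomial_eq]
    congr 1
    exact prod_univ_pow (fun i => X i) k
  set R0 := f 0 ^ k 0 - C (s ^ k 0) * (X 0 : MvPolynomial (Fin 2) ℝ) ^ k 0 with hR0
  set R1 := f 1 ^ k 1 - C (s ^ k 1) * (X 1 : MvPolynomial (Fin 2) ℝ) ^ k 1 with hR1
  have key : bind₁ f (monomial k a) - C (s ^ (k 0 + k 1)) * monomial k a
      = C a * (R0 * f 1 ^ k 1 + (C (s ^ k 0) * X 0 ^ k 0) * R1) := by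
    rw [hbm, hmon, pow_add, map_mul, hR0, hR1]; ring
  rw [key]
  refine (totalDegree_mul _ _).trans ?_
  rw [totalDegree_C]
  have hmax := totalDegree_add (R0 * f 1 ^ k 1) ((C (s ^ k 0) * X 0 ^ k 0) * R1)
  have h0 : (R0 * f 1 ^ k 1).totalDegree ≤ k 0 + k 1 - 1 := by
    rcases Nat.eq_zero_or_pos (k 0) with h | h
    · have : R0 = 0 := by simp [hR0, h]
      simp [this]
    · refine (totalDegree_mul _ _).trans ?_
      have h1 := pow_sub_top s (![c0, c1] 0) 0 (k 0)
      have h2 := (totalDegree_pow (f 1) (k 1)).trans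
        (Nat.mul_le_mul_left (k 1) (deg_lin s (![c0, c1] 1) 1))
      rw [← hR0] at h1
      simp only [mul_one] at h2
      omega
  have h1 : ((C (s ^ k 0) * X 0 ^ k 0) * R1).totalDegree ≤ k 0 + k 1 - 1 := by
    rcases Nat.eq_zero_or_pos (k 1) with h | h
    · have : R1 = 0 := by simp [hR1, h]
      simp [this]
    · refine (totalDegree_mul _ _).trans ?_
      have h1 := pow_sub_top s (![c0, c1] 1) 1 (k 1)
      have h2 := deg_CXpow s 0 (k 0)
      rw [← hR1] at h1
      omega
  omega

private lemma key_sub (s c0 c1 : ℝ) (H : MvPolynomial (Fin 2) ℝ) (m : ℕ)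
    (hH : H.IsHomogeneous m) :
    ((bind₁ (fun i : Fin 2 => C s * X i + C (![c0, c1] i)) H
      - C (s ^ m) * H : MvPolynomial (Fin 2) ℝ)).totalDegree ≤ m - 1 := by
  set f : Fin 2 → MvPolynomial (Fin 2) ℝ := fun i => C s * X i + C (![c0, c1] i) with hf
  have hsplit : bind₁ f H - C (s ^ m) * H
      = ∑ k ∈ H.support, (bind₁ f (monomial k (coeff k H))
          - C (s ^ m) * monomial k (coeff k H)) := by
    rw [Finset.sum_sub_distrib, ← map_sum, ← Finset.mul_sum, support_sum_monomial_coeff]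
  rw [hsplit]
  refine (totalDegree_finset_sum _ _).trans (Finset.sup_le fun k hk => ?_)
  have hdeg : k 0 + k 1 = m := by
    have := hH (mem_support_iff.mp hk)
    simp [Finsupp.weight, Finsupp.linearCombination, Finsupp.sum] at this
    rw [← this,
      Finset.sum_subset (Finset.subset_univ k.support) (by intro i _ h; simpa using h)]
    simp [Fin.sum_univ_two]
  rw [← hdeg]
  exact bind_monomial_sub s c0 c1 k (coeff k H)

private lemma eval_bind (x : Fin 2 → ℝ) (g : Fin 2 → MvPolynomial (Fin 2) ℝ)
    (φ : MvPolynomial (Fin 2) ℝ) :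
    eval x (bind₁ g φ) = eval (fun i => eval x (g i)) φ :=
  eval₂Hom_bind₁ (RingHom.id ℝ) x g φ

end Aux

/-- If Q is exact for degree ≤ d, H is homogeneous of degree d+1, and
A(x) = s•x + c is affine, then E_Q(H ∘ A) = s^{d+1} · E_Q(H). -/
theorem errQ_homogeneous_comp_affine {n d : ℕ}
    (x : Fin n → ℝ × ℝ) (w : Fin n → ℝ)
    (hx : ∀ i, x i ∈ refTriangle) (hexact : ExactDeg x w d)
    (H : MvPolynomial (Fin 2) ℝ) (hH : H.IsHomogeneous (d + 1))
    (s : ℝ) (c : ℝ × ℝ) :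
    errQ x w (fun q => evalP H (s • q + c)) =
      s ^ (d + 1) * errQ x w (evalP H) := by
  classical
  open MvPolynomial in
  set f : Fin 2 → MvPolynomial (Fin 2) ℝ :=
    fun i => MvPolynomial.C s * MvPolynomial.X i + MvPolynomial.C (![c.1, c.2] i) with hf
  set R : MvPolynomial (Fin 2) ℝ :=
    MvPolynomial.bind₁ f H - MvPolynomial.C (s ^ (d + 1)) * H with hRdef
  have hRdeg : R.totalDegree ≤ d := by
    have h := key_sub s c.1 c.2 H (d + 1) hH
    simp only [Nat.add_sub_cancel] at h
    exact h
  have hpt : ∀ q : ℝ × ℝ, evalP H (s • q + c) = s ^ (d + 1) * evalP H q + evalP R q := by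
    intro q
    have h1 : evalP (MvPolynomial.bind₁ f H) q = evalP H (s • q + c) := by
      unfold evalP
      rw [eval_bind]
      have hv : (fun i => MvPolynomial.eval ![q.1, q.2] (f i))
          = ![(s • q + c).1, (s • q + c).2] := by
        funext i
        fin_cases i <;>
          simp [hf, Prod.smul_fst, Prod.smul_snd, smul_eq_mul]
      rw [hv]
    have h2 : evalP R q = evalP (MvPolynomial.bind₁ f H) q - s ^ (d + 1) * evalP H q := by
      simp [hRdef, evalP]
    rw [h2, ← h1]; ring
  have hfun : (fun q => evalP H (s • q + c))
      = fun q => s ^ (d + 1) * evalP H q + evalP R q := funext hpt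
  have hcpt : IsCompact refTriangle := (Set.toFinite _).isCompact_convexHull ℝ
  have hint : ∀ p : MvPolynomial (Fin 2) ℝ, IntegrableOn (evalP p) refTriangle := by
    intro p
    have h1 : Continuous (fun q : ℝ × ℝ => (![q.1, q.2] : Fin 2 → ℝ)) := by
      apply continuous_pi; intro i; fin_cases i
      · simpa using continuous_fst
      · simpa using continuous_snd
    exact (((MvPolynomial.continuous_eval p).comp h1).continuousOn).integrableOn_compact hcpt
  have hI : (∫ q in refTriangle, (s ^ (d + 1) * evalP H q + evalP R q))
      = s ^ (d + 1) * (∫ q in refTriangle, evalP H q) + ∫ q in refTriangle, evalP R q := by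
    rw [integral_add ((hint H).const_mul _) (hint R), integral_const_mul]
  have hQ : quadApply x w (fun q => s ^ (d + 1) * evalP H q + evalP R q)
      = s ^ (d + 1) * quadApply x w (evalP H) + quadApply x w (evalP R) := by
    simp [quadApply, mul_add, Finset.sum_add_distrib, Finset.mul_sum, mul_left_comm]
  have hR0 : (∫ q in refTriangle, evalP R q) = quadApply x w (evalP R) := hexact R hRdeg
  simp only [errQ, hfun, hI, hQ, hR0]
  ring
end

section
/- Let Q be a quadrature rule on the reference triangle T that is exact for degree ≤ d. Then for every m ∈ ℕ, every real polynomial p in two variables of total degree ≤ d+1, and H its degree-(d+1) homogeneous component, the m-fold composite error satisfies E_m(p) = ((3 + (−1)^{d+1}) / 2^{d+3})^m · E_Q(H). -/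
open MeasureTheory

/-- The four midpoint-subdivision affine maps A₁, A₂, A₃, A₄. -/
noncomputable def subdivMap : Fin 4 → (ℝ × ℝ) → (ℝ × ℝ) :=
  ![fun v => (1/2 + v.1/2, v.2/2),
    fun v => (v.1/2, 1/2 + v.2/2),
    fun v => (v.1/2, v.2/2),
    fun v => (1/2 - v.1/2, 1/2 - v.2/2)]

/-- Composition A_{s 0} ∘ A_{s 1} ∘ ⋯ ∘ A_{s (m-1)}. -/
noncomputable def compSubdiv : {m : ℕ} → (Fin m → Fin 4) → (ℝ × ℝ) → (ℝ × ℝ)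
  | 0, _ => id
  | _ + 1, s => subdivMap (s 0) ∘ compSubdiv (fun i => s i.succ)

/-- The m-fold composite rule Q_m(f) = 4⁻ᵐ ∑_{s ∈ {1,2,3,4}ᵐ} Q(f ∘ A_{s₁} ∘ ⋯ ∘ A_{sₘ}). -/
noncomputable def Qm {n : ℕ} (x : Fin n → ℝ × ℝ) (w : Fin n → ℝ) (m : ℕ)
    (f : ℝ × ℝ → ℝ) : ℝ :=
  ((4 : ℝ) ^ m)⁻¹ * ∑ s : Fin m → Fin 4, quadApply x w (f ∘ compSubdiv s)

/-- Error of the m-fold composite rule: E_m(f) = ∫_T f - Q_m(f). -/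
noncomputable def Em {n : ℕ} (x : Fin n → ℝ × ℝ) (w : Fin n → ℝ) (m : ℕ)
    (f : ℝ × ℝ → ℝ) : ℝ :=
  (∫ q in refTriangle, f q) - Qm x w m f


open MvPolynomial

namespace QuadAux

lemma degree_eq_sum (v : Fin 2 →₀ ℕ) : v.degree = v.sum fun _ e => e := rfl

lemma degree_add (u v : Fin 2 →₀ ℕ) : (u + v).degree = u.degree + v.degree := by
  simp only [degree_eq_sum]
  exact Finsupp.sum_add_index' (fun _ => rfl) (fun _ _ _ => rfl)

lemma degree_single (i : Fin 2) (e : ℕ) : (Finsupp.single i e).degree = e := by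
  simp only [degree_eq_sum]
  exact Finsupp.sum_single_index rfl

lemma totalDegree_monomial_le' (v : Fin 2 →₀ ℕ) (a : ℝ) :
    (monomial v a).totalDegree ≤ v.degree := by
  rw [degree_eq_sum]; exact totalDegree_monomial_le _ _

lemma totalDegree_C_mul_X_pow_le (c : ℝ) (i : Fin 2) (e : ℕ) :
    (C c * X i ^ e : MvPolynomial (Fin 2) ℝ).totalDegree ≤ e := by
  refine le_trans (totalDegree_mul _ _) ?_
  rw [totalDegree_C, totalDegree_X_pow, zero_add]

noncomputable def gmap (b : Fin 2 → ℝ) (lam : ℝ) : Fin 2 → MvPolynomial (Fin 2) ℝ :=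
  fun i => C (b i) + C lam * X i

lemma totalDegree_gmap_le (b : Fin 2 → ℝ) (lam : ℝ) (i : Fin 2) :
    (gmap b lam i).totalDegree ≤ 1 := by
  refine le_trans (totalDegree_add _ _) ?_
  simp only [max_le_iff, totalDegree_C]
  refine ⟨Nat.zero_le _, le_trans (totalDegree_mul _ _) ?_⟩
  simp [totalDegree_X]

lemma gpow (b : Fin 2 → ℝ) (lam : ℝ) (i : Fin 2) (e : ℕ) :
    ∃ r : MvPolynomial (Fin 2) ℝ, gmap b lam i ^ e = C (lam ^ e) * X i ^ e + r ∧
      (r = 0 ∨ r.totalDegree < e) := by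
  induction e with
  | zero => exact ⟨0, by simp, Or.inl rfl⟩
  | succ e ih =>
    obtain ⟨r, hr, hd⟩ := ih
    refine ⟨C (b i) * (C (lam ^ e) * X i ^ e) + gmap b lam i * r, ?_, Or.inr ?_⟩
    · rw [pow_succ, hr, pow_succ lam, C_mul]
      simp only [gmap]
      ring
    · refine lt_of_le_of_lt (totalDegree_add _ _) ?_
      have h1 : (C (b i) * (C (lam ^ e) * X i ^ e)).totalDegree ≤ e := by
        refine le_trans (totalDegree_mul _ _) ?_
        simp only [totalDegree_C, zero_add]
        exact totalDegree_C_mul_X_pow_le _ _ _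
      have h2 : (gmap b lam i * r).totalDegree ≤ e := by
        rcases hd with h | h
        · simp [h]
        · refine le_trans (totalDegree_mul _ _) ?_
          have := totalDegree_gmap_le b lam i
          omega
      simp only [max_lt_iff]
      omega

lemma gprod (b : Fin 2 → ℝ) (lam : ℝ) (v : Fin 2 →₀ ℕ) :
    ∃ r : MvPolynomial (Fin 2) ℝ,
      (v.prod fun i e => gmap b lam i ^ e) = C (lam ^ v.degree) * monomial v 1 + r ∧
      (r = 0 ∨ r.totalDegree < v.degree) := by
  induction v using Finsupp.induction with
  | zero => exact ⟨0, by simp, Or.inl rfl⟩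
  | single_add i e v hi he ih =>
    obtain ⟨r₂, hr₂, hd₂⟩ := ih
    obtain ⟨r₁, hr₁, hd₁⟩ := gpow b lam i e
    have hprod : ((Finsupp.single i e + v).prod fun i e => gmap b lam i ^ e)
        = gmap b lam i ^ e * v.prod fun i e => gmap b lam i ^ e := by
      rw [Finsupp.prod_add_index (fun _ _ => pow_zero _) (fun a _ m n => pow_add _ _ _)]
      congr 1
      exact Finsupp.prod_single_index (pow_zero _)
    have hdeg : (Finsupp.single i e + v).degree = e + v.degree := by
      rw [degree_add, degree_single]
    have hepos : 0 < e + v.degree := by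
      have : e ≠ 0 := he
      omega
    have hXe : (C (lam ^ e) * X i ^ e : MvPolynomial (Fin 2) ℝ).totalDegree ≤ e :=
      totalDegree_C_mul_X_pow_le _ _ _
    have hMv : (C (lam ^ v.degree) * monomial v (1:ℝ)).totalDegree ≤ v.degree := by
      refine le_trans (totalDegree_mul _ _) ?_
      have := totalDegree_monomial_le' v (1:ℝ)
      simp only [totalDegree_C, zero_add]
      exact this
    refine ⟨C (lam ^ e) * X i ^ e * r₂ + r₁ * (C (lam ^ v.degree) * monomial v 1) + r₁ * r₂,
      ?_, Or.inr ?_⟩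
    · rw [hprod, hr₁, hr₂, hdeg]
      have hmono : (C (lam ^ e) * X i ^ e) * (C (lam ^ v.degree) * monomial v 1)
          = C (lam ^ (e + v.degree)) * monomial (Finsupp.single i e + v) 1 := by
        rw [X_pow_eq_monomial, pow_add]
        rw [show (C (lam ^ e) * monomial (Finsupp.single i e) 1) *
            (C (lam ^ v.degree) * monomial v 1)
            = (C (lam ^ e) * C (lam ^ v.degree)) *
              (monomial (Finsupp.single i e) (1:ℝ) * monomial v 1) by ring]
        rw [monomial_mul, ← C_mul]
        simp
      rw [← hmono]
      ring
    · rw [hdeg]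
      have hb1 : (C (lam ^ e) * X i ^ e * r₂).totalDegree < e + v.degree := by
        rcases hd₂ with h | h
        · simp only [h, mul_zero, totalDegree_zero]; omega
        · refine lt_of_le_of_lt (totalDegree_mul _ _) ?_
          omega
      have hb2 : (r₁ * (C (lam ^ v.degree) * monomial v 1)).totalDegree < e + v.degree := by
        rcases hd₁ with h | h
        · simp only [h, zero_mul, totalDegree_zero]; omega
        · refine lt_of_le_of_lt (totalDegree_mul _ _) ?_
          omega
      have hb3 : (r₁ * r₂).totalDegree < e + v.degree := by
        rcases hd₁ with h | h
        · simp only [h, zero_mul, totalDegree_zero]; omega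
        · rcases hd₂ with h2 | h2
          · simp only [h2, mul_zero, totalDegree_zero]; omega
          · refine lt_of_le_of_lt (totalDegree_mul _ _) ?_
            omega
      refine lt_of_le_of_lt (totalDegree_add _ _) ?_
      refine max_lt (lt_of_le_of_lt (totalDegree_add _ _) ?_) hb3
      exact max_lt hb1 hb2

end QuadAux
section PartB
open MvPolynomial
namespace QuadAux

lemma homogeneousComponent_monomial_self (v : Fin 2 →₀ ℕ) (a : ℝ) :
    homogeneousComponent v.degree (monomial v a) = monomial v a := by
  ext u
  rw [coeff_homogeneousComponent, coeff_monomial]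
  by_cases h : v = u
  · subst h; simp
  · simp [h, coeff_monomial]

lemma homogeneousComponent_monomial_ne (D : ℕ) (v : Fin 2 →₀ ℕ) (a : ℝ) (h : v.degree ≠ D) :
    homogeneousComponent D (monomial v a) = 0 := by
  ext u
  rw [coeff_homogeneousComponent, coeff_monomial]
  by_cases hu : v = u
  · subst hu; simp [h]
  · simp [hu, coeff_monomial]

lemma totalDegree_bind_gmap_le (b : Fin 2 → ℝ) (lam : ℝ) (p : MvPolynomial (Fin 2) ℝ) :
    (bind₁ (gmap b lam) p).totalDegree ≤ p.totalDegree := by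
  conv_lhs => rw [p.as_sum]
  rw [map_sum]
  refine le_trans (totalDegree_finset_sum _ _) ?_
  refine Finset.sup_le fun v hv => ?_
  rw [bind₁_monomial]
  refine le_trans (totalDegree_mul _ _) ?_
  rw [totalDegree_C, zero_add]
  obtain ⟨r, hr, hd⟩ := gprod b lam v
  have h1 : ((v.prod fun i e => gmap b lam i ^ e)).totalDegree ≤ v.degree := by
    rw [hr]
    refine le_trans (totalDegree_add _ _) (max_le ?_ ?_)
    · refine le_trans (totalDegree_mul _ _) ?_
      rw [totalDegree_C, zero_add]
      exact totalDegree_monomial_le' v 1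
    · rcases hd with h | h
      · simp [h]
      · omega
  refine le_trans ?_ (le_trans h1 ?_)
  · exact le_of_eq rfl
  · rw [degree_eq_sum]
    exact le_totalDegree hv

lemma homogComp_bind_gmap (b : Fin 2 → ℝ) (lam : ℝ) (D : ℕ) (p : MvPolynomial (Fin 2) ℝ)
    (hp : p.totalDegree ≤ D) :
    homogeneousComponent D (bind₁ (gmap b lam) p) = lam ^ D • homogeneousComponent D p := by
  conv_lhs => rw [p.as_sum]
  conv_rhs => rw [p.as_sum]
  rw [map_sum, map_sum, map_sum, Finset.smul_sum]
  refine Finset.sum_congr rfl fun v hv => ?_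
  have hvD : v.degree ≤ D := by
    rw [degree_eq_sum]; exact le_trans (le_totalDegree hv) hp
  rcases lt_or_eq_of_le hvD with hlt | heq
  · rw [homogeneousComponent_eq_zero, homogeneousComponent_monomial_ne D v _ (Nat.ne_of_lt hlt),
      smul_zero]
    refine lt_of_le_of_lt ?_ hlt
    refine le_trans (totalDegree_bind_gmap_le b lam _) (totalDegree_monomial_le' v _)
  · subst heq
    rw [bind₁_monomial, homogeneousComponent_monomial_self]
    obtain ⟨r, hr, hd⟩ := gprod b lam v
    rw [show (∏ i ∈ v.support, gmap b lam i ^ v i : MvPolynomial (Fin 2) ℝ)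
        = v.prod fun i e => gmap b lam i ^ e from rfl, hr, mul_add, map_add]
    have hzero : homogeneousComponent v.degree (C (coeff v p) * r) = 0 := by
      rcases hd with h | h
      · simp [h]
      · refine homogeneousComponent_eq_zero _ _ ?_
        refine lt_of_le_of_lt (le_trans (totalDegree_mul _ _) ?_) h
        rw [totalDegree_C, zero_add]
    rw [hzero, add_zero]
    have : C (coeff v p) * (C (lam ^ v.degree) * monomial v 1)
        = monomial v (lam ^ v.degree * coeff v p) := by
      rw [← mul_assoc, ← C_mul, C_mul_monomial, mul_one, mul_comm]
    rw [this]
    have hd2 : (monomial v (lam ^ v.degree * coeff v p)).totalDegree ≤ v.degree :=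
      totalDegree_monomial_le' _ _
    rw [show monomial v (lam ^ v.degree * coeff v p) = lam ^ v.degree • monomial v (coeff v p) by
      rw [smul_monomial]; rfl]
    rw [_root_.map_smul, homogeneousComponent_monomial_self]

lemma totalDegree_sub_homog (d : ℕ) (p : MvPolynomial (Fin 2) ℝ) (hp : p.totalDegree ≤ d + 1) :
    (p - homogeneousComponent (d + 1) p).totalDegree ≤ d := by
  rw [totalDegree]
  refine Finset.sup_le fun u hu => ?_
  rw [mem_support_iff, coeff_sub, coeff_homogeneousComponent] at hu
  by_cases h : u.degree = d + 1
  · simp [h] at hu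
  · rw [if_neg h, sub_zero] at hu
    have h2 := le_trans (le_totalDegree (p := p) (mem_support_iff.2 hu)) hp
    rw [degree_eq_sum] at h
    omega

end QuadAux
end PartB
section PartC
open MeasureTheory
namespace QuadAux

lemma refTriangle_eq : refTriangle = {v : ℝ × ℝ | 0 ≤ v.1 ∧ 0 ≤ v.2 ∧ v.1 + v.2 ≤ 1} := by
  apply Set.Subset.antisymm
  · apply convexHull_min
    · intro v hv
      rcases hv with h | h | h <;> subst h <;> norm_num
    · intro a ha b hb s t hs ht hst
      obtain ⟨ha1, ha2, ha3⟩ := ha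
      obtain ⟨hb1, hb2, hb3⟩ := hb
      refine ⟨?_, ?_, ?_⟩ <;> simp only [Prod.fst_add, Prod.snd_add, Prod.smul_fst,
        Prod.smul_snd, smul_eq_mul] <;> nlinarith
  · rintro v ⟨h1, h2, h3⟩
    have hmem := (convex_convexHull ℝ ({(0, 0), (1, 0), (0, 1)} : Set (ℝ × ℝ))).sum_mem
      (t := (Finset.univ : Finset (Fin 3))) (w := ![1 - v.1 - v.2, v.1, v.2])
      (z := ![(0, 0), (1, 0), (0, 1)])
      (fun i _ => by fin_cases i <;> simp <;> linarith)
      (by simp [Fin.sum_univ_three]; ring)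
      (fun i _ => by fin_cases i <;> simp [Set.mem_insert_iff] <;>
        exact subset_convexHull ℝ _ (by simp))
    have heq : ∑ i : Fin 3, (![1 - v.1 - v.2, v.1, v.2] i) • (![(0, 0), (1, 0), (0, 1)] i) = v := by
      simp only [Fin.sum_univ_three, Matrix.cons_val_zero, Matrix.cons_val_one, Matrix.head_cons,
        Matrix.cons_val_two, Matrix.tail_cons]
      refine Prod.ext ?_ ?_ <;>
        simp only [Prod.fst_add, Prod.snd_add, Prod.smul_fst, Prod.smul_snd, smul_eq_mul] <;>
        norm_num
    rwa [heq] at hmem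

lemma isCompact_refT : IsCompact refTriangle :=
  (Set.toFinite _).isCompact_convexHull ℝ

lemma measurableSet_refT : MeasurableSet refTriangle :=
  isCompact_refT.isClosed.measurableSet

lemma integrableOn_refT (f : ℝ × ℝ → ℝ) (hf : Continuous f) : IntegrableOn f refTriangle :=
  hf.continuousOn.integrableOn_compact isCompact_refT

lemma continuous_evalP (p : MvPolynomial (Fin 2) ℝ) : Continuous (evalP p) := by
  have hre : ∀ v : ℝ × ℝ, evalP p v
      = ∑ u ∈ p.support, MvPolynomial.coeff u p * (v.1 ^ u 0 * v.2 ^ u 1) := by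
    intro v
    rw [evalP, MvPolynomial.eval_eq']
    refine Finset.sum_congr rfl fun u _ => ?_
    congr 1
    rw [Fin.prod_univ_two]
    simp
  have : (fun v : ℝ × ℝ => ∑ u ∈ p.support, MvPolynomial.coeff u p * (v.1 ^ u 0 * v.2 ^ u 1))
      = evalP p := by funext v; rw [hre]
  rw [← this]
  exact continuous_finset_sum _ fun u _ =>
    continuous_const.mul ((continuous_fst.pow _).mul (continuous_snd.pow _))

noncomputable def Binv : Fin 4 → (ℝ × ℝ) → (ℝ × ℝ) :=
  ![fun v => (2 * v.1 - 1, 2 * v.2),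
    fun v => (2 * v.1, 2 * v.2 - 1),
    fun v => (2 * v.1, 2 * v.2),
    fun v => (1 - 2 * v.1, 1 - 2 * v.2)]

lemma subdiv_linv (s : Fin 4) : Function.LeftInverse (Binv s) (subdivMap s) := by
  fin_cases s <;> intro v <;>
    simp [subdivMap, Binv, Prod.ext_iff] <;> constructor <;> ring

lemma subdiv_rinv (s : Fin 4) : Function.RightInverse (Binv s) (subdivMap s) := by
  fin_cases s <;> intro v <;> refine Prod.ext ?_ ?_ <;> simp [subdivMap, Binv] <;> ring

lemma img (s : Fin 4) : subdivMap s '' refTriangle = Binv s ⁻¹' refTriangle :=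
  congrFun (Set.image_eq_preimage_of_inverse (subdiv_linv s) (subdiv_rinv s)) refTriangle

lemma continuous_Binv (s : Fin 4) : Continuous (Binv s) := by
  fin_cases s <;>
    refine Continuous.prodMk ?_ ?_ <;> fun_prop

lemma measurableSet_img (s : Fin 4) : MeasurableSet (subdivMap s '' refTriangle) := by
  rw [img]
  exact (continuous_Binv s).measurable measurableSet_refT

lemma img_subset (s : Fin 4) : subdivMap s '' refTriangle ⊆ refTriangle := by
  rintro v ⟨u, hu, rfl⟩
  rw [refTriangle_eq] at hu ⊢
  obtain ⟨h1, h2, h3⟩ := hu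
  fin_cases s <;> simp [subdivMap] <;> refine ⟨by linarith, by linarith, by linarith⟩

lemma union_eq :
    (subdivMap 0 '' refTriangle ∪ subdivMap 1 '' refTriangle) ∪
      (subdivMap 2 '' refTriangle ∪ subdivMap 3 '' refTriangle) = refTriangle := by
  ext v
  simp only [img]
  simp [refTriangle_eq, Binv, Set.mem_union, Set.mem_preimage, Set.mem_setOf_eq]
  constructor
  · rintro ((⟨h1, h2, h3⟩ | ⟨h1, h2, h3⟩) | (⟨h1, h2, h3⟩ | ⟨h1, h2, h3⟩)) <;>
      refine ⟨by linarith, by linarith, by linarith⟩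
  · rintro ⟨h1, h2, h3⟩
    rcases le_or_gt (1/2) v.1 with hx | hx
    · exact Or.inl (Or.inl ⟨by linarith, by linarith, by linarith⟩)
    rcases le_or_gt (1/2) v.2 with hy | hy
    · exact Or.inl (Or.inr ⟨by linarith, by linarith, by linarith⟩)
    rcases le_or_gt (v.1 + v.2) (1/2) with hz | hz
    · exact Or.inr (Or.inl ⟨by linarith, by linarith, by linarith⟩)
    · exact Or.inr (Or.inr ⟨by linarith, by linarith, by linarith⟩)

end QuadAux
end PartC
section PartD
open MeasureTheory
namespace QuadAux

lemma null_snd (g : ℝ → ℝ) (hg : Measurable g) :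
    volume {v : ℝ × ℝ | v.2 = g v.1} = 0 := by
  have hm : MeasurableSet {v : ℝ × ℝ | v.2 = g v.1} :=
    measurableSet_eq_fun measurable_snd (hg.comp measurable_fst)
  rw [Measure.volume_eq_prod, Measure.prod_apply hm]
  have hz : ∀ x : ℝ, (volume : Measure ℝ) (Prod.mk x ⁻¹' {v : ℝ × ℝ | v.2 = g v.1}) = 0 := by
    intro x
    have : (Prod.mk x ⁻¹' {v : ℝ × ℝ | v.2 = g v.1}) = {g x} := by
      ext y; simp
    rw [this]
    exact measure_singleton _
  simp [hz]

lemma null_fst_const (c : ℝ) : volume {v : ℝ × ℝ | v.1 = c} = 0 := by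
  have h : {v : ℝ × ℝ | v.1 = c} = ({c} : Set ℝ) ×ˢ (Set.univ : Set ℝ) := by
    ext ⟨x, y⟩; simp [eq_comm]
  rw [h, Measure.volume_eq_prod, Measure.prod_prod]
  simp

lemma mem_img_iff (s : Fin 4) (v : ℝ × ℝ) :
    v ∈ subdivMap s '' refTriangle ↔ 0 ≤ (Binv s v).1 ∧ 0 ≤ (Binv s v).2 ∧
      (Binv s v).1 + (Binv s v).2 ≤ 1 := by
  rw [img, refTriangle_eq]; rfl

lemma disj01 : AEDisjoint volume (subdivMap 0 '' refTriangle) (subdivMap 1 '' refTriangle) := by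
  refine measure_mono_null ?_ (null_snd (fun t => 1 - t) (by fun_prop))
  rintro v ⟨hv0, hv1⟩
  rw [mem_img_iff] at hv0 hv1
  simp only [Binv] at hv0 hv1
  simp at hv0 hv1
  obtain ⟨a0, a1, a2⟩ := hv0; obtain ⟨b0, b1, b2⟩ := hv1
  show v.2 = 1 - v.1
  linarith

lemma disj02 : AEDisjoint volume (subdivMap 0 '' refTriangle) (subdivMap 2 '' refTriangle) := by
  refine measure_mono_null ?_ (null_fst_const (1/2))
  rintro v ⟨hv0, hv1⟩
  rw [mem_img_iff] at hv0 hv1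
  simp only [Binv] at hv0 hv1
  simp at hv0 hv1
  obtain ⟨a0, a1, a2⟩ := hv0; obtain ⟨b0, b1, b2⟩ := hv1
  show v.1 = 1/2
  linarith

lemma disj03 : AEDisjoint volume (subdivMap 0 '' refTriangle) (subdivMap 3 '' refTriangle) := by
  refine measure_mono_null ?_ (null_fst_const (1/2))
  rintro v ⟨hv0, hv1⟩
  rw [mem_img_iff] at hv0 hv1
  simp only [Binv] at hv0 hv1
  simp at hv0 hv1
  obtain ⟨a0, a1, a2⟩ := hv0; obtain ⟨b0, b1, b2⟩ := hv1
  show v.1 = 1/2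
  linarith

lemma disj12 : AEDisjoint volume (subdivMap 1 '' refTriangle) (subdivMap 2 '' refTriangle) := by
  refine measure_mono_null ?_ (null_snd (fun _ => 1/2) (by fun_prop))
  rintro v ⟨hv0, hv1⟩
  rw [mem_img_iff] at hv0 hv1
  simp only [Binv] at hv0 hv1
  simp at hv0 hv1
  obtain ⟨a0, a1, a2⟩ := hv0; obtain ⟨b0, b1, b2⟩ := hv1
  show v.2 = 1/2
  linarith

lemma disj13 : AEDisjoint volume (subdivMap 1 '' refTriangle) (subdivMap 3 '' refTriangle) := by
  refine measure_mono_null ?_ (null_snd (fun _ => 1/2) (by fun_prop))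
  rintro v ⟨hv0, hv1⟩
  rw [mem_img_iff] at hv0 hv1
  simp only [Binv] at hv0 hv1
  simp at hv0 hv1
  obtain ⟨a0, a1, a2⟩ := hv0; obtain ⟨b0, b1, b2⟩ := hv1
  show v.2 = 1/2
  linarith

lemma disj23 : AEDisjoint volume (subdivMap 2 '' refTriangle) (subdivMap 3 '' refTriangle) := by
  refine measure_mono_null ?_ (null_snd (fun t => 1/2 - t) (by fun_prop))
  rintro v ⟨hv0, hv1⟩
  rw [mem_img_iff] at hv0 hv1
  simp only [Binv] at hv0 hv1
  simp at hv0 hv1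
  obtain ⟨a0, a1, a2⟩ := hv0; obtain ⟨b0, b1, b2⟩ := hv1
  show v.2 = 1/2 - v.1
  linarith

lemma integral_split (f : ℝ × ℝ → ℝ) (hf : Continuous f) :
    ∫ v in refTriangle, f v = ∑ s : Fin 4, ∫ v in subdivMap s '' refTriangle, f v := by
  have hint : ∀ s : Fin 4, IntegrableOn f (subdivMap s '' refTriangle) :=
    fun s => (integrableOn_refT f hf).mono_set (img_subset s)
  rw [Fin.sum_univ_four]
  conv_lhs => rw [← union_eq]
  rw [integral_union_ae
      (AEDisjoint.union_left (AEDisjoint.union_right disj02 disj03)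
        (AEDisjoint.union_right disj12 disj13))
      (((measurableSet_img 2).union (measurableSet_img 3)).nullMeasurableSet)
      ((hint 0).union (hint 1)) ((hint 2).union (hint 3)),
    integral_union_ae disj01 (measurableSet_img 1).nullMeasurableSet (hint 0) (hint 1),
    integral_union_ae disj23 (measurableSet_img 3).nullMeasurableSet (hint 2) (hint 3)]
  ring

lemma cov_gen (a : ℝ × ℝ) (l : ℝ) (hl : l ≠ 0) (f : ℝ × ℝ → ℝ) :
    ∫ v in (fun v : ℝ × ℝ => a + l • v) '' refTriangle, f v
      = |l ^ 2| * ∫ v in refTriangle, f (a + l • v) := by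
  have hder : ∀ x ∈ refTriangle, HasFDerivWithinAt (fun v : ℝ × ℝ => a + l • v)
      (l • (ContinuousLinearMap.id ℝ (ℝ × ℝ))) refTriangle x := fun x _ =>
    (((hasFDerivAt_id x).const_smul l).const_add a).hasFDerivWithinAt
  have hinj : Set.InjOn (fun v : ℝ × ℝ => a + l • v) refTriangle := by
    intro u _ v _ h
    simp only at h
    exact smul_right_injective _ hl (add_left_cancel h)
  rw [integral_image_eq_integral_abs_det_fderiv_smul volume measurableSet_refT hder hinj f]
  have hfr : Module.finrank ℝ (ℝ × ℝ) = 2 := by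
    simp [Module.finrank_prod]
  have hdet : (l • ContinuousLinearMap.id ℝ (ℝ × ℝ)).det = l ^ 2 := by
    show LinearMap.det (((l • ContinuousLinearMap.id ℝ (ℝ × ℝ) : (ℝ × ℝ) →L[ℝ] (ℝ × ℝ))) :
      (ℝ × ℝ) →ₗ[ℝ] (ℝ × ℝ)) = l ^ 2
    have h1 : (((l • ContinuousLinearMap.id ℝ (ℝ × ℝ) : (ℝ × ℝ) →L[ℝ] (ℝ × ℝ))) :
        (ℝ × ℝ) →ₗ[ℝ] (ℝ × ℝ)) = l • (LinearMap.id : (ℝ × ℝ) →ₗ[ℝ] (ℝ × ℝ)) :=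
      LinearMap.ext fun v => rfl
    rw [h1, LinearMap.det_smul, LinearMap.det_id, mul_one, hfr]
  simp only [hdet]
  rw [integral_smul, smul_eq_mul]

lemma subdiv_as_affine (s : Fin 4) : ∃ a : ℝ × ℝ, ∃ l : ℝ, l ≠ 0 ∧ |l ^ 2| = (4:ℝ)⁻¹ ∧
    subdivMap s = fun v => a + l • v := by
  fin_cases s
  · exact ⟨(1/2, 0), 1/2, by norm_num, by norm_num, by
      funext v; refine Prod.ext ?_ ?_ <;>
        simp [subdivMap, Prod.smul_fst, Prod.smul_snd, smul_eq_mul] <;> ring⟩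
  · exact ⟨(0, 1/2), 1/2, by norm_num, by norm_num, by
      funext v; refine Prod.ext ?_ ?_ <;>
        simp [subdivMap, Prod.smul_fst, Prod.smul_snd, smul_eq_mul] <;> ring⟩
  · exact ⟨(0, 0), 1/2, by norm_num, by norm_num, by
      funext v; refine Prod.ext ?_ ?_ <;>
        simp [subdivMap, Prod.smul_fst, Prod.smul_snd, smul_eq_mul] <;> ring⟩
  · exact ⟨(1/2, 1/2), -(1/2), by norm_num, by norm_num, by
      funext v; refine Prod.ext ?_ ?_ <;>
        simp [subdivMap, Prod.smul_fst, Prod.smul_snd, smul_eq_mul] <;> ring⟩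

lemma cov (s : Fin 4) (f : ℝ × ℝ → ℝ) :
    ∫ v in subdivMap s '' refTriangle, f v = (4:ℝ)⁻¹ * ∫ v in refTriangle, f (subdivMap s v) := by
  obtain ⟨a, l, hl, habs, heq⟩ := subdiv_as_affine s
  rw [heq, cov_gen a l hl f, habs]

lemma split_quarter (f : ℝ × ℝ → ℝ) (hf : Continuous f) :
    ∫ v in refTriangle, f v
      = (4:ℝ)⁻¹ * ∑ s : Fin 4, ∫ v in refTriangle, f (subdivMap s v) := by
  rw [integral_split f hf, Finset.mul_sum]
  exact Finset.sum_congr rfl fun s _ => cov s f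

end QuadAux
end PartD
section PartE
open MvPolynomial MeasureTheory

namespace QuadAux

noncomputable def bvec : Fin 4 → Fin 2 → ℝ :=
  ![![1/2, 0], ![0, 1/2], ![0, 0], ![1/2, 1/2]]

noncomputable def eps : Fin 4 → ℝ := ![1, 1, 1, -1]

noncomputable def substS (s : Fin 4) : MvPolynomial (Fin 2) ℝ → MvPolynomial (Fin 2) ℝ :=
  bind₁ (gmap (bvec s) (eps s / 2))

lemma subdivMap_coords (s : Fin 4) (v : ℝ × ℝ) :
    subdivMap s v = (bvec s 0 + (eps s / 2) * v.1, bvec s 1 + (eps s / 2) * v.2) := by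
  fin_cases s <;> refine Prod.ext ?_ ?_ <;> simp [subdivMap, bvec, eps] <;> ring

lemma evalP_substS (s : Fin 4) (p : MvPolynomial (Fin 2) ℝ) (v : ℝ × ℝ) :
    evalP (substS s p) v = evalP p (subdivMap s v) := by
  rw [evalP, evalP, substS]
  rw [show eval ![v.1, v.2] (bind₁ (gmap (bvec s) (eps s / 2)) p)
      = eval (fun i => eval ![v.1, v.2] (gmap (bvec s) (eps s / 2) i)) p from
    eval₂Hom_bind₁ _ _ _ _]
  have hpt : (fun i => eval ![v.1, v.2] (gmap (bvec s) (eps s / 2) i))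
      = ![(subdivMap s v).1, (subdivMap s v).2] := by
    funext i
    fin_cases i <;> simp [gmap, subdivMap_coords]
  rw [hpt]

lemma Qm_zero {n : ℕ} (x : Fin n → ℝ × ℝ) (w : Fin n → ℝ) (f : ℝ × ℝ → ℝ) :
    Qm x w 0 f = quadApply x w f := by
  simp [Qm, compSubdiv]

lemma compSubdiv_cons (m : ℕ) (a : Fin 4) (t : Fin m → Fin 4) :
    compSubdiv (Fin.cons a t) = subdivMap a ∘ compSubdiv t := by
  rw [compSubdiv]
  simp only [Fin.cons_zero, Fin.cons_succ]

lemma Qm_succ {n : ℕ} (x : Fin n → ℝ × ℝ) (w : Fin n → ℝ) (m : ℕ) (f : ℝ × ℝ → ℝ) :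
    Qm x w (m + 1) f = (4:ℝ)⁻¹ * ∑ a : Fin 4, Qm x w m (f ∘ subdivMap a) := by
  unfold Qm
  rw [← Equiv.sum_comp (Fin.consEquiv fun _ : Fin (m + 1) => Fin 4)
    (fun s => quadApply x w (f ∘ compSubdiv s)), Fintype.sum_prod_type]
  have hterm : ∀ (a : Fin 4) (t : Fin m → Fin 4),
      quadApply x w (f ∘ compSubdiv ((Fin.consEquiv fun _ : Fin (m + 1) => Fin 4) (a, t)))
        = quadApply x w ((f ∘ subdivMap a) ∘ compSubdiv t) := by
    intro a t
    have : (Fin.consEquiv fun _ : Fin (m + 1) => Fin 4) (a, t) = Fin.cons a t := rfl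
    rw [this, compSubdiv_cons, ← Function.comp_assoc]
  rw [Finset.sum_congr rfl fun a _ => Finset.sum_congr rfl fun t _ => hterm a t]
  rw [← Finset.mul_sum, pow_succ, mul_inv]
  ring

lemma Em_zero {n : ℕ} (x : Fin n → ℝ × ℝ) (w : Fin n → ℝ) (f : ℝ × ℝ → ℝ) :
    Em x w 0 f = errQ x w f := by
  rw [Em, errQ, Qm_zero]

lemma Em_succ {n : ℕ} (x : Fin n → ℝ × ℝ) (w : Fin n → ℝ) (m : ℕ) (f : ℝ × ℝ → ℝ)
    (hf : Continuous f) :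
    Em x w (m + 1) f = (4:ℝ)⁻¹ * ∑ a : Fin 4, Em x w m (f ∘ subdivMap a) := by
  rw [Em, Qm_succ, split_quarter f hf, ← mul_sub, ← Finset.sum_sub_distrib]
  refine congrArg _ (Finset.sum_congr rfl fun a _ => ?_)
  rw [Em]
  rfl

lemma errQ_add {n : ℕ} (x : Fin n → ℝ × ℝ) (w : Fin n → ℝ) (f g : ℝ × ℝ → ℝ)
    (hf : IntegrableOn f refTriangle) (hg : IntegrableOn g refTriangle) :
    errQ x w (fun v => f v + g v) = errQ x w f + errQ x w g := by
  rw [errQ, errQ, errQ]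
  have : (∫ q in refTriangle, (fun v => f v + g v) q) =
      (∫ q in refTriangle, f q) + ∫ q in refTriangle, g q := by
    simp only
    exact integral_add hf hg
  rw [this, quadApply, quadApply, quadApply]
  simp only [mul_add]
  rw [Finset.sum_add_distrib]
  ring

lemma errQ_smul {n : ℕ} (x : Fin n → ℝ × ℝ) (w : Fin n → ℝ) (c : ℝ)
    (q : MvPolynomial (Fin 2) ℝ) :
    errQ x w (evalP (c • q)) = c * errQ x w (evalP q) := by
  have h : evalP (c • q) = fun v => c * evalP q v := funext fun v => by
    simp [evalP, smul_eval]
  rw [h, errQ, errQ]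
  have hi : (∫ v in refTriangle, (fun v => c * evalP q v) v)
      = c * ∫ v in refTriangle, evalP q v := by
    simp only
    exact integral_const_mul c _
  rw [hi, quadApply, quadApply, mul_sub]
  congr 1
  rw [Finset.mul_sum]
  exact Finset.sum_congr rfl fun i _ => by ring

lemma errQ_homog {n d : ℕ} (x : Fin n → ℝ × ℝ) (w : Fin n → ℝ)
    (hexact : ExactDeg x w d) (p : MvPolynomial (Fin 2) ℝ) (hp : p.totalDegree ≤ d + 1) :
    errQ x w (evalP p) = errQ x w (evalP (homogeneousComponent (d + 1) p)) := by
  set H := homogeneousComponent (d + 1) p with hH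
  have hzero : errQ x w (evalP (p - H)) = 0 := by
    rw [errQ, hexact (p - H) (totalDegree_sub_homog d p hp), sub_self]
  have hsplit : evalP p = fun v => evalP (p - H) v + evalP H v := funext fun v => by
    simp [evalP, map_sub]
  rw [hsplit, errQ_add x w _ _
    (integrableOn_refT _ (continuous_evalP _)) (integrableOn_refT _ (continuous_evalP _)),
    hzero, zero_add]

end QuadAux
end PartE

open QuadAux MvPolynomial in
/-- for every m and every p of total degree ≤ d+1 with degree-(d+1)
homogeneous component H, E_m(p) = ((3 + (-1)^{d+1}) / 2^{d+3})^m · E_Q(H). -/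
theorem Em_eq_pow {n d : ℕ}
    (x : Fin n → ℝ × ℝ) (w : Fin n → ℝ)
    (hx : ∀ i, x i ∈ refTriangle) (hexact : ExactDeg x w d)
    (m : ℕ) (p : MvPolynomial (Fin 2) ℝ) (hp : p.totalDegree ≤ d + 1) :
    Em x w m (evalP p) =
      ((3 + (-1 : ℝ) ^ (d + 1)) / 2 ^ (d + 3)) ^ m *
        errQ x w (evalP (MvPolynomial.homogeneousComponent (d + 1) p)) := by
  induction m generalizing p with
  | zero =>
    rw [Em_zero, pow_zero, one_mul]
    exact errQ_homog x w hexact p hp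
  | succ m ih =>
    have hc : Continuous (evalP p) := continuous_evalP p
    rw [Em_succ x w m (evalP p) hc]
    set c : ℝ := (3 + (-1 : ℝ) ^ (d + 1)) / 2 ^ (d + 3) with hc_def
    set E : ℝ := errQ x w (evalP (homogeneousComponent (d + 1) p)) with hE_def
    have hsum : ∀ a : Fin 4, Em x w m ((evalP p) ∘ subdivMap a)
        = c ^ m * ((eps a / 2) ^ (d + 1) * E) := by
      intro a
      have hcompP : (evalP p) ∘ subdivMap a = evalP (substS a p) :=
        funext fun v => by rw [Function.comp_apply, evalP_substS]
      have hdeg : (substS a p).totalDegree ≤ d + 1 :=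
        le_trans (totalDegree_bind_gmap_le _ _ _) hp
      rw [hcompP, ih (substS a p) hdeg]
      congr 1
      rw [show substS a p = bind₁ (gmap (bvec a) (eps a / 2)) p from rfl,
        homogComp_bind_gmap _ _ _ p hp, errQ_smul]
    rw [Finset.sum_congr rfl fun a _ => hsum a]
    have hepssum : ∑ a : Fin 4, ((eps a / 2 : ℝ)) ^ (d + 1)
        = (3 + (-1 : ℝ) ^ (d + 1)) / 2 ^ (d + 1) := by
      rw [Fin.sum_univ_four]
      simp only [eps, Matrix.cons_val_zero, Matrix.cons_val_one, Matrix.head_cons,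
        Matrix.cons_val_two, Matrix.tail_cons, Matrix.cons_val_three]
      rw [div_pow, div_pow, one_pow]
      ring
    have hfold : ∑ a : Fin 4, c ^ m * ((eps a / 2) ^ (d + 1) * E)
        = c ^ m * ((∑ a : Fin 4, (eps a / 2) ^ (d + 1)) * E) := by
      rw [← Finset.mul_sum, Finset.sum_mul]
    rw [hfold, hepssum, hc_def, pow_succ]
    have h23 : (2:ℝ) ^ (d + 3) = 2 ^ (d + 1) * 4 := by ring
    rw [h23]
    ring
end

section
/- Let Q be a quadrature rule on the reference triangle T that is exact for degree ≤ d, and let f : ℝ² → ℝ be of class C^{d+1} on an open set containing T. Then there exists a constant C ≥ 0 such that for every m ∈ ℕ, the m-fold composite error satisfies |E_m(f)| ≤ C · 2^{−m(d+1)}. -/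
open MeasureTheory

open Set

lemma line_null (q dir : ℝ×ℝ) (hd : dir ≠ 0) (S : Set (ℝ×ℝ))
    (hS : ∀ p ∈ S, ∃ t : ℝ, p - q = t • dir) : volume S = 0 := by
  have hsub : S ⊆ (AffineSubspace.mk' q (Submodule.span ℝ {dir}) : Set (ℝ×ℝ)) := by
    intro p hp
    obtain ⟨t, ht⟩ := hS p hp
    have : p -ᵥ q ∈ Submodule.span ℝ {dir} := by
      rw [Submodule.mem_span_singleton]; exact ⟨t, ht.symm⟩
    exact AffineSubspace.mem_mk'.2 this
  refine measure_mono_null hsub ?_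
  apply Measure.addHaar_affineSubspace
  intro h
  have h2 : (AffineSubspace.mk' q (Submodule.span ℝ {dir})).direction = ⊤ := by
    rw [h]; exact AffineSubspace.direction_top ℝ _ _
  rw [AffineSubspace.direction_mk'] at h2
  have h1 := finrank_span_singleton (K := ℝ) hd
  rw [h2, finrank_top] at h1
  have : Module.finrank ℝ (ℝ × ℝ) = 2 := by
    simp [Module.finrank_prod]
  omega

lemma refTriangle_eq : refTriangle = {p : ℝ×ℝ | 0 ≤ p.1 ∧ 0 ≤ p.2 ∧ p.1 + p.2 ≤ 1} := by
  apply Set.Subset.antisymm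
  · apply convexHull_min
    · rintro p (rfl | rfl | rfl) <;> norm_num
    · have h1 : Convex ℝ {p : ℝ×ℝ | 0 ≤ p.1} :=
        convex_halfSpace_ge (LinearMap.fst ℝ ℝ ℝ).isLinear 0
      have h2 : Convex ℝ {p : ℝ×ℝ | 0 ≤ p.2} :=
        convex_halfSpace_ge (LinearMap.snd ℝ ℝ ℝ).isLinear 0
      have h3 : Convex ℝ {p : ℝ×ℝ | p.1 + p.2 ≤ 1} :=
        convex_halfSpace_le (LinearMap.fst ℝ ℝ ℝ + LinearMap.snd ℝ ℝ ℝ).isLinear 1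
      exact fun p hp q hq a b ha hb hab =>
        ⟨h1 hp.1 hq.1 ha hb hab, h2 hp.2.1 hq.2.1 ha hb hab, h3 hp.2.2 hq.2.2 ha hb hab⟩
  · rintro ⟨px, py⟩ ⟨h1, h2, h3⟩
    have key : ((px, py) : ℝ×ℝ) = ∑ i : Fin 3,
        (![1 - px - py, px, py] i) • (![((0:ℝ),(0:ℝ)), (1,0), (0,1)] i) := by
      simp [Fin.sum_univ_three, Prod.ext_iff]
    rw [key]
    apply (convex_convexHull ℝ _).sum_mem
    · intro i _; fin_cases i <;> simp <;> linarith
    · simp [Fin.sum_univ_three]; ring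
    · intro i _
      apply subset_convexHull
      fin_cases i <;> simp

lemma isCompact_refTriangle : IsCompact refTriangle :=
  (Set.toFinite _).isCompact_convexHull (𝕜 := ℝ)

lemma subdivMap_mem (j : Fin 4) {v : ℝ×ℝ} (hv : v ∈ refTriangle) :
    subdivMap j v ∈ refTriangle := by
  rw [refTriangle_eq] at hv ⊢
  obtain ⟨h1, h2, h3⟩ := hv
  fin_cases j <;>
    refine ⟨?_, ?_, ?_⟩ <;> simp [subdivMap] <;> linarith

lemma subdivMap_affine (j : Fin 4) : ∃ (b : ℝ×ℝ) (c : ℝ), (c = 1/2 ∨ c = -(1/2)) ∧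
    ∀ v, subdivMap j v = b + c • v := by
  fin_cases j
  · exact ⟨(1/2, 0), 1/2, Or.inl rfl, fun v => by simp [subdivMap, Prod.ext_iff]; constructor <;> ring⟩
  · exact ⟨(0, 1/2), 1/2, Or.inl rfl, fun v => by simp [subdivMap, Prod.ext_iff]; constructor <;> ring⟩
  · exact ⟨(0, 0), 1/2, Or.inl rfl, fun v => by simp [subdivMap, Prod.ext_iff]; constructor <;> ring⟩
  · exact ⟨(1/2, 1/2), -(1/2), Or.inr rfl, fun v => by simp [subdivMap, Prod.ext_iff]; constructor <;> ring⟩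

lemma cover : refTriangle = subdivMap 0 '' refTriangle ∪ (subdivMap 1 '' refTriangle ∪
    (subdivMap 2 '' refTriangle ∪ subdivMap 3 '' refTriangle)) := by
  apply Set.Subset.antisymm
  · intro p hp
    rw [refTriangle_eq] at hp
    obtain ⟨h1, h2, h3⟩ := hp
    rcases le_or_gt (1/2) p.1 with h | h
    · left
      refine ⟨(2*p.1 - 1, 2*p.2), ?_, ?_⟩
      · rw [refTriangle_eq]
        exact ⟨by dsimp only; linarith, by dsimp only; linarith, by dsimp only; linarith⟩
      · refine Prod.ext ?_ ?_ <;> simp [subdivMap] <;> ring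
    rcases le_or_gt (1/2) p.2 with h' | h'
    · right; left
      refine ⟨(2*p.1, 2*p.2 - 1), ?_, ?_⟩
      · rw [refTriangle_eq]
        exact ⟨by dsimp only; linarith, by dsimp only; linarith, by dsimp only; linarith⟩
      · refine Prod.ext ?_ ?_ <;> simp [subdivMap] <;> ring
    rcases le_or_gt (p.1 + p.2) (1/2) with h'' | h''
    · right; right; left
      refine ⟨(2*p.1, 2*p.2), ?_, ?_⟩
      · rw [refTriangle_eq]
        exact ⟨by dsimp only; linarith, by dsimp only; linarith, by dsimp only; linarith⟩
      · refine Prod.ext ?_ ?_ <;> simp [subdivMap] <;> ring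
    · right; right; right
      refine ⟨(1 - 2*p.1, 1 - 2*p.2), ?_, ?_⟩
      · rw [refTriangle_eq]
        exact ⟨by dsimp only; linarith, by dsimp only; linarith, by dsimp only; linarith⟩
      · refine Prod.ext ?_ ?_ <;> simp [subdivMap] <;> ring
  · rintro p (⟨v, hv, rfl⟩ | ⟨v, hv, rfl⟩ | ⟨v, hv, rfl⟩ | ⟨v, hv, rfl⟩) <;>
      exact subdivMap_mem _ hv

-- properties of points in images
lemma img0 {p : ℝ×ℝ} (h : p ∈ subdivMap 0 '' refTriangle) : 1/2 ≤ p.1 := by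
  obtain ⟨v, hv, rfl⟩ := h
  rw [refTriangle_eq] at hv; simp [subdivMap]; linarith [hv.1]

lemma img1 {p : ℝ×ℝ} (h : p ∈ subdivMap 1 '' refTriangle) : 1/2 ≤ p.2 := by
  obtain ⟨v, hv, rfl⟩ := h
  rw [refTriangle_eq] at hv; simp [subdivMap]; linarith [hv.2.1]

lemma img2 {p : ℝ×ℝ} (h : p ∈ subdivMap 2 '' refTriangle) : p.1 + p.2 ≤ 1/2 := by
  obtain ⟨v, hv, rfl⟩ := h
  rw [refTriangle_eq] at hv; simp [subdivMap]; linarith [hv.2.2]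

lemma img3 {p : ℝ×ℝ} (h : p ∈ subdivMap 3 '' refTriangle) :
    p.1 ≤ 1/2 ∧ p.2 ≤ 1/2 ∧ 1/2 ≤ p.1 + p.2 := by
  obtain ⟨v, hv, rfl⟩ := h
  rw [refTriangle_eq] at hv
  refine ⟨?_, ?_, ?_⟩ <;> simp [subdivMap] <;> [linarith [hv.1]; linarith [hv.2.1]; linarith [hv.2.2]]

lemma null1 (c : ℝ) : volume {p : ℝ×ℝ | p.1 = c} = 0 := by
  apply line_null (c, 0) (0, 1) (by simp [Prod.ext_iff])
  rintro ⟨p1, p2⟩ hp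
  exact ⟨p2, by simp_all [Prod.ext_iff]⟩

lemma null2 (c : ℝ) : volume {p : ℝ×ℝ | p.2 = c} = 0 := by
  apply line_null (0, c) (1, 0) (by simp [Prod.ext_iff])
  rintro ⟨p1, p2⟩ hp
  exact ⟨p1, by simp_all [Prod.ext_iff]⟩

lemma null3 (c : ℝ) : volume {p : ℝ×ℝ | p.1 + p.2 = c} = 0 := by
  apply line_null (c, 0) (1, -1) (by simp [Prod.ext_iff])
  rintro ⟨p1, p2⟩ hp
  simp only [Set.mem_setOf_eq] at hp
  exact ⟨-p2, by simp [Prod.ext_iff]; linarith⟩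

-- change of variables for one subdivision map
lemma integral_image_subdiv (j : Fin 4) (g : ℝ×ℝ → ℝ) :
    ∫ p in subdivMap j '' refTriangle, g p = (4:ℝ)⁻¹ * ∫ v in refTriangle, g (subdivMap j v) := by
  obtain ⟨b, c, hc, hbc⟩ := subdivMap_affine j
  have hc0 : c ≠ 0 := by rcases hc with rfl | rfl <;> norm_num
  have hmeas : MeasurableSet refTriangle := isCompact_refTriangle.measurableSet
  have hfd : ∀ v ∈ refTriangle, HasFDerivWithinAt (subdivMap j)
      (c • ContinuousLinearMap.id ℝ (ℝ×ℝ)) refTriangle v := by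
    intro v _
    have : HasFDerivAt (fun v : ℝ×ℝ => b + c • v) (c • ContinuousLinearMap.id ℝ (ℝ×ℝ)) v :=
      ((hasFDerivAt_id v).const_smul c).const_add b
    exact (this.congr_of_eventuallyEq (Filter.Eventually.of_forall fun u => (hbc u))).hasFDerivWithinAt
  have hinj : Set.InjOn (subdivMap j) refTriangle := by
    intro u _ v _ h
    rw [hbc, hbc] at h
    have := add_left_cancel h
    exact smul_right_injective _ hc0 this
  rw [integral_image_eq_integral_abs_det_fderiv_smul volume hmeas hfd hinj g]
  have hdet : (c • ContinuousLinearMap.id ℝ (ℝ×ℝ)).det = c^2 := by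
    show LinearMap.det (ContinuousLinearMap.toLinearMap (c • ContinuousLinearMap.id ℝ (ℝ×ℝ))) = c^2
    rw [ContinuousLinearMap.coe_smul, ContinuousLinearMap.coe_id, LinearMap.det_smul,
      LinearMap.det_id, mul_one]
    simp [Module.finrank_prod]
  have habs : |(c • ContinuousLinearMap.id ℝ (ℝ×ℝ)).det| = (4:ℝ)⁻¹ := by
    rw [hdet]; rcases hc with rfl | rfl <;> norm_num
  calc ∫ v in refTriangle, |(c • ContinuousLinearMap.id ℝ (ℝ×ℝ)).det| • g (subdivMap j v)
      = ∫ v in refTriangle, (4:ℝ)⁻¹ * g (subdivMap j v) := by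
        simp only [habs, smul_eq_mul]
    _ = (4:ℝ)⁻¹ * ∫ v in refTriangle, g (subdivMap j v) := integral_const_mul _ _

lemma continuous_subdivMap (j : Fin 4) : Continuous (subdivMap j) := by
  obtain ⟨b, c, _, h⟩ := subdivMap_affine j
  have : subdivMap j = fun v => b + c • v := funext h
  rw [this]
  continuity

lemma isCompact_img (j : Fin 4) : IsCompact (subdivMap j '' refTriangle) :=
  isCompact_refTriangle.image (continuous_subdivMap j)

lemma img_subset (j : Fin 4) : subdivMap j '' refTriangle ⊆ refTriangle := by
  rintro p ⟨v, hv, rfl⟩; exact subdivMap_mem j hv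

lemma split_integral (g : ℝ×ℝ → ℝ) (hg : ContinuousOn g refTriangle) :
    ∫ p in refTriangle, g p
      = (4:ℝ)⁻¹ * ∑ j : Fin 4, ∫ v in refTriangle, g (subdivMap j v) := by
  set T : Fin 4 → Set (ℝ×ℝ) := fun j => subdivMap j '' refTriangle with hT
  have hint : ∀ j, IntegrableOn g (T j) := fun j =>
    (hg.mono (img_subset j)).integrableOn_compact (isCompact_img j)
  have hm : ∀ j, NullMeasurableSet (T j) volume := fun j =>
    (isCompact_img j).measurableSet.nullMeasurableSet
  have hTsub : ∀ j, T j ⊆ {p : ℝ×ℝ | 0 ≤ p.1 ∧ 0 ≤ p.2 ∧ p.1 + p.2 ≤ 1} := fun j => by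
    rw [← refTriangle_eq]; exact img_subset j
  have h01 : volume (T 0 ∩ T 1) = 0 := by
    refine measure_mono_null (fun p hp => ?_) (null1 (1/2))
    have := img0 hp.1; have := img1 hp.2; have := (hTsub 1 hp.2).2.2
    show p.1 = 1/2; linarith
  have h02 : volume (T 0 ∩ T 2) = 0 := by
    refine measure_mono_null (fun p hp => ?_) (null1 (1/2))
    have := img0 hp.1; have := img2 hp.2; have := (hTsub 2 hp.2).2.1
    show p.1 = 1/2; linarith
  have h03 : volume (T 0 ∩ T 3) = 0 := by
    refine measure_mono_null (fun p hp => ?_) (null1 (1/2))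
    have := img0 hp.1; have := (img3 hp.2).1
    show p.1 = 1/2; linarith
  have h12 : volume (T 1 ∩ T 2) = 0 := by
    refine measure_mono_null (fun p hp => ?_) (null2 (1/2))
    have := img1 hp.1; have := img2 hp.2; have := (hTsub 2 hp.2).1
    show p.2 = 1/2; linarith
  have h13 : volume (T 1 ∩ T 3) = 0 := by
    refine measure_mono_null (fun p hp => ?_) (null2 (1/2))
    have := img1 hp.1; have := (img3 hp.2).2.1
    show p.2 = 1/2; linarith
  have h23 : volume (T 2 ∩ T 3) = 0 := by
    refine measure_mono_null (fun p hp => ?_) (null3 (1/2))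
    have := img2 hp.1; have := (img3 hp.2).2.2
    show p.1 + p.2 = 1/2; linarith
  have d0 : AEDisjoint volume (T 0) (T 1 ∪ (T 2 ∪ T 3)) := by
    unfold AEDisjoint
    rw [Set.inter_union_distrib_left, Set.inter_union_distrib_left]
    exact measure_union_null h01 (measure_union_null h02 h03)
  have d1 : AEDisjoint volume (T 1) (T 2 ∪ T 3) := by
    unfold AEDisjoint
    rw [Set.inter_union_distrib_left]
    exact measure_union_null h12 h13
  have key : ∫ p in refTriangle, g p = ∑ j : Fin 4, ∫ p in T j, g p := by
    rw [Fin.sum_univ_four]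
    conv_lhs => rw [cover]
    rw [integral_union_ae d0 ((hm 1).union ((hm 2).union (hm 3))) (hint 0)
        ((hint 1).union ((hint 2).union (hint 3))),
      integral_union_ae d1 ((hm 2).union (hm 3)) (hint 1) ((hint 2).union (hint 3)),
      integral_union_ae h23 (hm 3) (hint 2) (hint 3)]
    ring
  rw [key, Finset.mul_sum]
  congr 1
  ext j
  exact integral_image_subdiv j g

lemma compSubdiv_cons {m : ℕ} (j : Fin 4) (s : Fin m → Fin 4) :
    compSubdiv (Fin.cons j s) = subdivMap j ∘ compSubdiv s := by
  have h0 : (Fin.cons j s : Fin (m+1) → Fin 4) 0 = j := rfl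
  have hs : (fun i : Fin m => (Fin.cons j s : Fin (m+1) → Fin 4) i.succ) = s := by
    funext i; simp [Fin.cons_succ]
  show subdivMap ((Fin.cons j s : Fin (m+1) → Fin 4) 0)
      ∘ compSubdiv (fun i => (Fin.cons j s : Fin (m+1) → Fin 4) i.succ)
      = subdivMap j ∘ compSubdiv s
  rw [h0, hs]

lemma compSubdiv_affine {m : ℕ} (s : Fin m → Fin 4) :
    ∃ (b : ℝ×ℝ) (c : ℝ), |c| = ((2:ℝ)⁻¹) ^ m ∧ ∀ v, compSubdiv s v = b + c • v := by
  induction m with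
  | zero => exact ⟨0, 1, by norm_num, fun v => by simp [compSubdiv]⟩
  | succ m ih =>
    obtain ⟨b', c', hc', hb'⟩ := ih (fun i => s i.succ)
    obtain ⟨b₀, c₀, hc₀, hb₀⟩ := subdivMap_affine (s 0)
    refine ⟨b₀ + c₀ • b', c₀ * c', ?_, fun v => ?_⟩
    · rw [abs_mul, hc']
      have h2 : |c₀| = 2⁻¹ := by
        rcases hc₀ with rfl | rfl
        · rw [abs_of_pos] <;> norm_num
        · rw [abs_neg, abs_of_pos] <;> norm_num
      rw [h2, pow_succ]; ring
    · show subdivMap (s 0) (compSubdiv (fun i => s i.succ) v) = _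
      rw [hb', hb₀]
      rw [smul_add, add_assoc, smul_smul]

lemma compSubdiv_mem {m : ℕ} (s : Fin m → Fin 4) {v : ℝ×ℝ} (hv : v ∈ refTriangle) :
    compSubdiv s v ∈ refTriangle := by
  induction m with
  | zero => exact hv
  | succ m ih => exact subdivMap_mem (s 0) (ih (fun i => s i.succ))

lemma continuous_compSubdiv {m : ℕ} (s : Fin m → Fin 4) : Continuous (compSubdiv s) := by
  obtain ⟨b, c, _, h⟩ := compSubdiv_affine s
  have : compSubdiv s = fun v => b + c • v := funext h
  rw [this]; continuity

lemma split_integral_m (m : ℕ) (g : ℝ×ℝ → ℝ) (hg : ContinuousOn g refTriangle) :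
    ∫ p in refTriangle, g p = ((4:ℝ)^m)⁻¹ *
      ∑ s : Fin m → Fin 4, ∫ v in refTriangle, g (compSubdiv s v) := by
  induction m generalizing g with
  | zero => simp [compSubdiv]
  | succ m ih =>
    rw [split_integral g hg]
    have step : ∀ j : Fin 4, ∫ v in refTriangle, g (subdivMap j v)
        = ((4:ℝ)^m)⁻¹ * ∑ s : Fin m → Fin 4,
            ∫ v in refTriangle, g (subdivMap j (compSubdiv s v)) := by
      intro j
      exact ih (g ∘ subdivMap j)
        (hg.comp (continuous_subdivMap j).continuousOn (fun v hv => subdivMap_mem j hv))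
    calc (4:ℝ)⁻¹ * ∑ j : Fin 4, ∫ v in refTriangle, g (subdivMap j v)
        = (4:ℝ)⁻¹ * ∑ j : Fin 4, ((4:ℝ)^m)⁻¹ * ∑ s : Fin m → Fin 4,
            ∫ v in refTriangle, g (subdivMap j (compSubdiv s v)) := by
          congr 1; exact Finset.sum_congr rfl (fun j _ => step j)
      _ = ∑ j : Fin 4, (4:ℝ)⁻¹ * (((4:ℝ)^m)⁻¹ * ∑ s : Fin m → Fin 4,
            ∫ v in refTriangle, g (subdivMap j (compSubdiv s v))) := Finset.mul_sum _ _ _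
      _ = ∑ j : Fin 4, ((4:ℝ)^(m+1))⁻¹ * ∑ s : Fin m → Fin 4,
            ∫ v in refTriangle, g (subdivMap j (compSubdiv s v)) := by
          refine Finset.sum_congr rfl (fun j _ => ?_)
          rw [← mul_assoc]
          congr 1
          rw [pow_succ, mul_inv]
          ring
      _ = ((4:ℝ)^(m+1))⁻¹ * ∑ j : Fin 4, ∑ s : Fin m → Fin 4,
            ∫ v in refTriangle, g (subdivMap j (compSubdiv s v)) := (Finset.mul_sum _ _ _).symm
      _ = ((4:ℝ)^(m+1))⁻¹ * ∑ s : Fin (m+1) → Fin 4,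
            ∫ v in refTriangle, g (compSubdiv s v) := by
          congr 1
          conv_rhs => rw [← Equiv.sum_comp (Fin.consEquiv (fun _ : Fin (m+1) => Fin 4))
            (fun s : Fin (m+1) → Fin 4 => ∫ v in refTriangle, g (compSubdiv s v))]
          rw [Fintype.sum_prod_type]
          refine Finset.sum_congr rfl (fun j _ => Finset.sum_congr rfl (fun t _ => ?_))
          have he : (Fin.consEquiv (fun _ : Fin (m+1) => Fin 4)) (j, t) = Fin.cons j t := rfl
          rw [he, compSubdiv_cons]
          rfl

lemma taylor_eval_01 (g : ℝ → ℝ) (n : ℕ) :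
    taylorWithinEval g n (Icc (0:ℝ) 1) 0 1
      = ∑ k ∈ Finset.range (n+1), (k.factorial : ℝ)⁻¹ • iteratedDerivWithin k g (Icc (0:ℝ) 1) 0 := by
  induction n with
  | zero => simp
  | succ n ih =>
    rw [taylorWithinEval_succ, ih]
    rw [Finset.sum_range_succ _ (n+1)]
    congr 1
    simp [Nat.factorial_succ, smul_eq_mul]

-- chain rule for iterated derivatives along a segment
lemma chain_iter {f : ℝ×ℝ → ℝ} {U : Set (ℝ×ℝ)} (hU : IsOpen U) {N : ℕ}
    (hf : ContDiffOn ℝ N f U) {a v : ℝ×ℝ}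
    (hseg : ∀ t ∈ Icc (0:ℝ) 1, a + t • v ∈ U) :
    ∀ k ≤ N, ∀ t ∈ Icc (0:ℝ) 1,
      iteratedDerivWithin k (fun t => f (a + t • v)) (Icc (0:ℝ) 1) t
        = iteratedFDerivWithin ℝ k f U (a + t • v) (fun _ => v) := by
  intro k
  induction k with
  | zero => intro _ t _; simp
  | succ k ih =>
    intro hk t ht
    have hk' : k ≤ N := Nat.le_of_succ_le hk
    have hud : UniqueDiffOn ℝ (Icc (0:ℝ) 1) := uniqueDiffOn_Icc (by norm_num)
    rw [iteratedDerivWithin_succ]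
    have heq : Set.EqOn (iteratedDerivWithin k (fun t => f (a + t • v)) (Icc (0:ℝ) 1))
        (fun t => iteratedFDerivWithin ℝ k f U (a + t • v) (fun _ => v)) (Icc (0:ℝ) 1) :=
      fun u hu => ih hk' u hu
    rw [derivWithin_congr heq (heq ht)]
    -- differentiate t ↦ F_k (φ t) applied to (v,...,v)
    have hdiff : DifferentiableOn ℝ (iteratedFDerivWithin ℝ k f U) U :=
      hf.differentiableOn_iteratedFDerivWithin (by exact_mod_cast hk) hU.uniqueDiffOn
    have hφ : HasDerivWithinAt (fun t : ℝ => a + t • v) v (Icc (0:ℝ) 1) t := by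
      have : HasDerivAt (fun t : ℝ => a + t • v) ((1:ℝ) • v) t :=
        ((hasDerivAt_id t).smul_const v).const_add a
      simpa using this.hasDerivWithinAt
    have hF : HasFDerivWithinAt (iteratedFDerivWithin ℝ k f U)
        (fderivWithin ℝ (iteratedFDerivWithin ℝ k f U) U (a + t • v)) U (a + t • v) :=
      (hdiff _ (hseg t ht)).hasFDerivWithinAt
    have hcomp : HasDerivWithinAt (fun u : ℝ => iteratedFDerivWithin ℝ k f U (a + u • v))
        (fderivWithin ℝ (iteratedFDerivWithin ℝ k f U) U (a + t • v) v) (Icc (0:ℝ) 1) t :=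
      (hF.comp_hasDerivWithinAt t hφ (fun u hu => hseg u hu))
    have happ : HasDerivWithinAt
        (fun u : ℝ => iteratedFDerivWithin ℝ k f U (a + u • v) (fun _ => v))
        ((fderivWithin ℝ (iteratedFDerivWithin ℝ k f U) U (a + t • v) v) (fun _ => v))
        (Icc (0:ℝ) 1) t := by
      have := (ContinuousMultilinearMap.apply ℝ (fun _ : Fin k => (ℝ×ℝ)) ℝ
        (fun _ => v)).hasFDerivAt.comp_hasDerivWithinAt t hcomp
      exact this
    rw [happ.derivWithin (hud t ht)]
    rw [iteratedFDerivWithin_succ_apply_left]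
    rfl

lemma taylor_bound {f : ℝ×ℝ → ℝ} {U : Set (ℝ×ℝ)} (hU : IsOpen U) (hTU : refTriangle ⊆ U)
    {d : ℕ} (hf : ContDiffOn ℝ (d + 1 : ℕ) f U) :
    ∃ M, 0 ≤ M ∧ ∀ a ∈ refTriangle, ∀ y ∈ refTriangle,
      |f y - ∑ k ∈ Finset.range (d+1),
          (k.factorial : ℝ)⁻¹ • iteratedFDerivWithin ℝ k f U a (fun _ => y - a)|
        ≤ M * ‖y - a‖^(d+1) := by
  obtain ⟨M₀, hM₀⟩ := isCompact_refTriangle.exists_bound_of_continuousOn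
    ((hf.continuousOn_iteratedFDerivWithin (le_refl _) hU.uniqueDiffOn).mono hTU)
  have hM₀0 : 0 ≤ M₀ := le_trans (norm_nonneg _) (hM₀ _ (by
    apply subset_convexHull; left; rfl))
  refine ⟨M₀ / d.factorial, by positivity, fun a ha y hy => ?_⟩
  set v := y - a with hv
  have hseg : ∀ t ∈ Icc (0:ℝ) 1, a + t • v ∈ refTriangle := fun t ht =>
    (convex_convexHull ℝ _).add_smul_sub_mem ha hy ht
  have hsegU : ∀ t ∈ Icc (0:ℝ) 1, a + t • v ∈ U := fun t ht => hTU (hseg t ht)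
  set g : ℝ → ℝ := fun t => f (a + t • v) with hg
  have hgC : ContDiffOn ℝ (d + 1 : ℕ) g (Icc (0:ℝ) 1) := by
    apply hf.comp
    · exact (contDiff_const.add (contDiff_id.smul contDiff_const)).contDiffOn
    · exact fun t ht => hsegU t ht
  have hchain := chain_iter hU hf hsegU
  have hbound : ∀ u ∈ Icc (0:ℝ) 1,
      ‖iteratedDerivWithin (d+1) g (Icc (0:ℝ) 1) u‖ ≤ M₀ * ‖v‖^(d+1) := by
    intro u hu
    rw [hchain (d+1) (le_refl _) u hu]
    refine le_trans (ContinuousMultilinearMap.le_opNorm _ _) ?_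
    simp only [Finset.prod_const, Finset.card_univ, Fintype.card_fin]
    exact mul_le_mul_of_nonneg_right (hM₀ _ (hseg u hu)) (by positivity)
  have key := taylor_mean_remainder_bound (by norm_num : (0:ℝ) ≤ 1) hgC
    (by norm_num : (1:ℝ) ∈ Icc (0:ℝ) 1) hbound
  have h1 : g 1 = f y := by
    simp only [hg, one_smul, hv]
    congr 1
    abel
  have h2 : taylorWithinEval g d (Icc (0:ℝ) 1) 0 1
      = ∑ k ∈ Finset.range (d+1),
          (k.factorial : ℝ)⁻¹ • iteratedFDerivWithin ℝ k f U a (fun _ => v) := by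
    rw [taylor_eval_01]
    refine Finset.sum_congr rfl (fun k hk => ?_)
    rw [hchain k (by have := Finset.mem_range.1 hk; omega : k ≤ d+1) 0 (by norm_num)]
    simp
  rw [h1, h2] at key
  calc |f y - ∑ k ∈ Finset.range (d+1),
          (k.factorial : ℝ)⁻¹ • iteratedFDerivWithin ℝ k f U a (fun _ => v)|
      ≤ M₀ * ‖v‖^(d+1) * (1 - 0)^(d+1) / d.factorial := key
    _ = M₀ / d.factorial * ‖v‖^(d+1) := by ring_nf

noncomputable def stdB : Fin 2 → ℝ×ℝ := ![(1,0),(0,1)]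

noncomputable def taylorPoly (f : ℝ×ℝ → ℝ) (U : Set (ℝ×ℝ)) (d : ℕ) (a b : ℝ×ℝ) (c : ℝ) :
    MvPolynomial (Fin 2) ℝ :=
  ∑ k ∈ Finset.range (d+1), ∑ r : Fin k → Fin 2,
    MvPolynomial.C ((k.factorial : ℝ)⁻¹ * iteratedFDerivWithin ℝ k f U a (fun i => stdB (r i))) *
      ∏ i : Fin k, (MvPolynomial.C c * MvPolynomial.X (r i)
        + MvPolynomial.C (![(b-a).1, (b-a).2] (r i)))

lemma taylorPoly_degree (f : ℝ×ℝ → ℝ) (U : Set (ℝ×ℝ)) (d : ℕ) (a b : ℝ×ℝ) (c : ℝ) :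
    (taylorPoly f U d a b c).totalDegree ≤ d := by
  refine le_trans (MvPolynomial.totalDegree_finset_sum _ _) ?_
  refine Finset.sup_le (fun k hk => ?_)
  refine le_trans (MvPolynomial.totalDegree_finset_sum _ _) ?_
  refine Finset.sup_le (fun r _ => ?_)
  refine le_trans (MvPolynomial.totalDegree_mul _ _) ?_
  rw [MvPolynomial.totalDegree_C, zero_add]
  refine le_trans (MvPolynomial.totalDegree_finset_prod _ _) ?_
  have hterm : ∀ i : Fin k, (MvPolynomial.C c * MvPolynomial.X (r i)
      + MvPolynomial.C (![(b-a).1, (b-a).2] (r i)) : MvPolynomial (Fin 2) ℝ).totalDegree ≤ 1 := by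
    intro i
    refine le_trans (MvPolynomial.totalDegree_add _ _) ?_
    refine max_le (le_trans (MvPolynomial.totalDegree_mul _ _) ?_) ?_
    · rw [MvPolynomial.totalDegree_C, zero_add, MvPolynomial.totalDegree_X]
    · rw [MvPolynomial.totalDegree_C]; omega
  refine le_trans (Finset.sum_le_sum (fun i _ => hterm i)) ?_
  simp only [Finset.sum_const, Finset.card_univ, Fintype.card_fin, smul_eq_mul, mul_one]
  exact Nat.le_of_lt_succ (Finset.mem_range.1 hk)

lemma taylorPoly_eval (f : ℝ×ℝ → ℝ) (U : Set (ℝ×ℝ)) (d : ℕ) (a b : ℝ×ℝ) (c : ℝ) (v : ℝ×ℝ) :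
    evalP (taylorPoly f U d a b c) v
      = ∑ k ∈ Finset.range (d+1),
          (k.factorial : ℝ)⁻¹ • iteratedFDerivWithin ℝ k f U a (fun _ => (b + c • v) - a) := by
  set y : ℝ×ℝ := b + c • v with hy
  set wc : Fin 2 → ℝ := fun j => c * (![v.1, v.2] j) + (![(b-a).1, (b-a).2] j) with hwc
  have hz : (∑ j : Fin 2, wc j • stdB j) = y - a := by
    rw [Fin.sum_univ_two]
    refine Prod.ext ?_ ?_ <;> simp [hwc, stdB, hy] <;> ring
  rw [evalP, taylorPoly, map_sum]
  refine Finset.sum_congr rfl (fun k hk => ?_)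
  rw [map_sum]
  have hexp : ((iteratedFDerivWithin ℝ k f U a : ContinuousMultilinearMap ℝ (fun _ : Fin k => ℝ×ℝ) ℝ)
      (fun _ => y - a))
      = ∑ r : Fin k → Fin 2, (∏ i, wc (r i)) •
          iteratedFDerivWithin ℝ k f U a (fun i => stdB (r i)) := by
    conv_lhs => rw [← hz]
    rw [show ((iteratedFDerivWithin ℝ k f U a) (fun _ : Fin k => ∑ j : Fin 2, wc j • stdB j))
        = (iteratedFDerivWithin ℝ k f U a).toMultilinearMap
            (fun _ : Fin k => ∑ j : Fin 2, wc j • stdB j) from rfl]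
    rw [MultilinearMap.map_sum]
    refine Finset.sum_congr rfl (fun r _ => ?_)
    rw [MultilinearMap.map_smul_univ]
    rfl
  rw [hexp, Finset.smul_sum]
  refine Finset.sum_congr rfl (fun r _ => ?_)
  rw [map_mul, MvPolynomial.eval_C, map_prod]
  have : ∀ i : Fin k, (MvPolynomial.eval ![v.1, v.2])
      (MvPolynomial.C c * MvPolynomial.X (r i) + MvPolynomial.C (![(b-a).1, (b-a).2] (r i)))
      = wc (r i) := by
    intro i
    simp [hwc]
  rw [Finset.prod_congr rfl (fun i _ => this i)]
  simp only [smul_eq_mul]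
  ring


lemma continuous_evalP (p : MvPolynomial (Fin 2) ℝ) : Continuous (evalP p) := by
  have h1 : Continuous fun q : ℝ×ℝ => (![q.1, q.2] : Fin 2 → ℝ) := by
    apply continuous_pi
    intro i
    fin_cases i
    · exact continuous_fst
    · exact continuous_snd
  exact (MvPolynomial.continuous_eval (p := p)).comp h1


/-- if Q is exact for degree ≤ d and f is C^{d+1} on an open set containing T,
then |E_m(f)| ≤ C · 2^{-m(d+1)} for some C ≥ 0. -/
theorem Em_le_of_contDiffOn {n d : ℕ}
    (x : Fin n → ℝ × ℝ) (w : Fin n → ℝ)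
    (hx : ∀ i, x i ∈ refTriangle) (hexact : ExactDeg x w d)
    (f : ℝ × ℝ → ℝ) (U : Set (ℝ × ℝ)) (hU : IsOpen U) (hTU : refTriangle ⊆ U)
    (hf : ContDiffOn ℝ (d + 1) f U) :
    ∃ C : ℝ, 0 ≤ C ∧ ∀ m : ℕ,
      |Em x w m f| ≤ C * ((2 : ℝ) ^ (m * (d + 1)))⁻¹ := by
  have hfc : ContinuousOn f refTriangle := hf.continuousOn.mono hTU
  have hfN : ContDiffOn ℝ ((d+1 : ℕ) : ℕ∞) f U := by exact_mod_cast hf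
  obtain ⟨M, hM0, hMb⟩ := taylor_bound hU hTU hfN
  set W : ℝ := ∑ i, |w i| with hW
  have hW0 : 0 ≤ W := Finset.sum_nonneg fun i _ => abs_nonneg _
  set V : ℝ := (volume refTriangle).toReal with hV
  have hV0 : 0 ≤ V := ENNReal.toReal_nonneg
  refine ⟨(V + W) * M, by positivity, fun m => ?_⟩
  have hTfin : volume refTriangle < ⊤ := isCompact_refTriangle.measure_lt_top
  set S : ℝ := M * ((2:ℝ)^(m*(d+1)))⁻¹ with hS
  have hS0 : 0 ≤ S := by positivity
  have key : ∀ s : Fin m → Fin 4, |errQ x w (f ∘ compSubdiv s)| ≤ (V + W) * S := by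
    intro s
    obtain ⟨b, c, hc, hbc⟩ := compSubdiv_affine s
    have hbT : b ∈ refTriangle := by
      have h0 : ((0,0) : ℝ×ℝ) ∈ refTriangle := by
        rw [refTriangle_eq]; norm_num
      have h1 := compSubdiv_mem s h0
      rw [hbc] at h1
      have h1' : b + c • (0:ℝ×ℝ) ∈ refTriangle := h1
      simpa using h1'
    set p := taylorPoly f U d b b c with hp
    have hzero : errQ x w (evalP p) = 0 := by
      rw [errQ, hexact p (taylorPoly_degree f U d b b c), sub_self]
    set g : ℝ×ℝ → ℝ := f ∘ compSubdiv s with hg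
    have hgc : ContinuousOn g refTriangle :=
      hfc.comp (continuous_compSubdiv s).continuousOn (fun v hv => compSubdiv_mem s hv)
    have hpt : ∀ v ∈ refTriangle, |g v - evalP p v| ≤ S := by
      intro v hv
      have hyT : compSubdiv s v ∈ refTriangle := compSubdiv_mem s hv
      have hyv : compSubdiv s v = b + c • v := hbc v
      have hstep : g v - evalP p v
          = f (b + c • v) - ∑ k ∈ Finset.range (d+1),
              (k.factorial : ℝ)⁻¹ • iteratedFDerivWithin ℝ k f U b (fun _ => (b + c • v) - b) := by
        rw [hg, Function.comp_apply, hyv, taylorPoly_eval f U d b b c v]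
      rw [hstep]
      have hbnd := hMb b hbT (b + c • v) (hyv ▸ hyT)
      refine le_trans hbnd ?_
      have hvle : ‖v‖ ≤ 1 := by
        rw [refTriangle_eq] at hv
        obtain ⟨h1, h2, h3⟩ := hv
        have : ‖v‖ = max ‖v.1‖ ‖v.2‖ := rfl
        rw [this]
        apply max_le <;> rw [Real.norm_eq_abs, abs_le] <;> constructor <;> linarith
      have hnorm : ‖(b + c • v) - b‖ ≤ ((2:ℝ)⁻¹)^m := by
        have he : (b + c • v) - b = c • v := by abel
        rw [he, norm_smul, Real.norm_eq_abs, hc]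
        calc ((2:ℝ)⁻¹)^m * ‖v‖ ≤ ((2:ℝ)⁻¹)^m * 1 :=
              mul_le_mul_of_nonneg_left hvle (by positivity)
          _ = ((2:ℝ)⁻¹)^m := mul_one _
      have hpow : ‖(b + c • v) - b‖^(d+1) ≤ ((2:ℝ)^(m*(d+1)))⁻¹ := by
        calc ‖(b + c • v) - b‖^(d+1) ≤ (((2:ℝ)⁻¹)^m)^(d+1) :=
              pow_le_pow_left₀ (norm_nonneg _) hnorm _
          _ = ((2:ℝ)^(m*(d+1)))⁻¹ := by
              rw [← pow_mul, inv_pow]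
      exact mul_le_mul_of_nonneg_left hpow hM0
    have hIg : IntegrableOn g refTriangle :=
      hgc.integrableOn_compact isCompact_refTriangle
    have hIp : IntegrableOn (evalP p) refTriangle :=
      (continuous_evalP p).continuousOn.integrableOn_compact isCompact_refTriangle
    have hEsub : errQ x w (fun q => g q - evalP p q) = errQ x w g - errQ x w (evalP p) := by
      simp only [errQ, quadApply]
      rw [integral_sub hIg hIp]
      simp only [mul_sub]
      rw [Finset.sum_sub_distrib]
      ring
    have hrw : errQ x w g = errQ x w (fun q => g q - evalP p q) := by
      rw [hEsub, hzero, sub_zero]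
    rw [show errQ x w (f ∘ compSubdiv s) = errQ x w g from rfl, hrw]
    set h : ℝ×ℝ → ℝ := fun q => g q - evalP p q with hh
    have hInt : |∫ q in refTriangle, h q| ≤ S * V := by
      rw [← Real.norm_eq_abs]
      refine (norm_setIntegral_le_of_norm_le_const (C := S) hTfin (fun q hq => ?_)).trans (le_of_eq ?_)
      · rw [Real.norm_eq_abs]; exact hpt q hq
      · rfl
    have hQ : |quadApply x w h| ≤ W * S := by
      rw [quadApply]
      refine le_trans (Finset.abs_sum_le_sum_abs _ _) ?_
      rw [hW, Finset.sum_mul]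
      refine Finset.sum_le_sum (fun i _ => ?_)
      rw [abs_mul]
      exact mul_le_mul_of_nonneg_left (hpt (x i) (hx i)) (abs_nonneg _)
    calc |errQ x w h| = |(∫ q in refTriangle, h q) - quadApply x w h| := rfl
      _ ≤ |∫ q in refTriangle, h q| + |quadApply x w h| := abs_sub _ _
      _ ≤ S * V + W * S := add_le_add hInt hQ
      _ = (V + W) * S := by ring
  have hEm : Em x w m f = ((4:ℝ)^m)⁻¹ * ∑ s : Fin m → Fin 4, errQ x w (f ∘ compSubdiv s) := by
    rw [Em, Qm, split_integral_m m f hfc, ← mul_sub, ← Finset.sum_sub_distrib]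
    congr 1
  rw [hEm]
  have h4 : (0:ℝ) < 4^m := by positivity
  rw [abs_mul, abs_inv, abs_pow]
  have : |(4:ℝ)| = 4 := by norm_num
  rw [this]
  calc ((4:ℝ)^m)⁻¹ * |∑ s : Fin m → Fin 4, errQ x w (f ∘ compSubdiv s)|
      ≤ ((4:ℝ)^m)⁻¹ * ((4:ℝ)^m * ((V + W) * S)) := by
        refine mul_le_mul_of_nonneg_left ?_ (by positivity)
        refine le_trans (Finset.abs_sum_le_sum_abs _ _) ?_
        refine le_trans (Finset.sum_le_sum (fun s _ => key s)) ?_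
        rw [Finset.sum_const, Finset.card_univ]
        rw [Fintype.card_fun]
        simp [nsmul_eq_mul]
    _ = (V + W) * S := by field_simp
    _ = (V + W) * M * ((2:ℝ)^(m*(d+1)))⁻¹ := by rw [hS]; ring
end
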